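/- The convolution of two log-concave sequences of nonnegative reals with no internal zeros is log-concave: if (a_n) and (b_n) are finitely supported sequences indexed by ℕ with a_n² ≥ a_{n-1}a_{n+1} and b_n² ≥ b_{n-1}b_{n+1} for all n ≥ 1, and each has support an interval, then c_n = Σ_k a_k b_{n-k} satisfies c_n² ≥ c_{n-1}c_{n+1} for all n ≥ 1. -/

import Mathlib

open Finset

/-- One-step ratio monotonicity for a log-concave sequence with no internal zeros. -/
lemma nat_step (a : ℕ → NNReal)
    (halc : ∀ n : ℕ, 1 ≤ n → a (n - 1) * a (n + 1) ≤ a n ^ 2)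
    (haint : ∀ i j k : ℕ, i ≤ j → j ≤ k → a i ≠ 0 → a k ≠ 0 → a j ≠ 0)
    (i j : ℕ) (hij : i ≤ j) : a i * a (j + 1) ≤ a (i + 1) * a j := by
  induction j, hij using Nat.le_induction with
  | base => rw [mul_comm]
  | succ j hij IH =>
    by_cases hj : a j = 0
    · by_cases hi : a i = 0
      · simp [hi]
      · by_cases hj2 : a (j + 1 + 1) = 0
        · simp [hj2]
        · exact absurd hj (haint i j (j + 1 + 1) hij (by omega) hi hj2)
    · have h1 : a j * a (j + 1 + 1) ≤ a (j + 1) ^ 2 := by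
        have := halc (j + 1) (by omega)
        simpa using this
      have key : a i * a (j + 1 + 1) * a j ≤ a (i + 1) * a (j + 1) * a j := by
        calc a i * a (j + 1 + 1) * a j = a i * (a j * a (j + 1 + 1)) := by ring
          _ ≤ a i * a (j + 1) ^ 2 := mul_le_mul_right h1 _
          _ = (a i * a (j + 1)) * a (j + 1) := by ring
          _ ≤ (a (i + 1) * a j) * a (j + 1) := mul_le_mul_left IH _
          _ = a (i + 1) * a (j + 1) * a j := by ring
      exact le_of_mul_le_mul_right key (pos_iff_ne_zero.mpr hj)

noncomputable def extSeq (a : ℕ → NNReal) : ℤ → ℝ :=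
  fun k => if 0 ≤ k then (a k.toNat : ℝ) else 0

lemma extSeq_natCast (a : ℕ → NNReal) (k : ℕ) : extSeq a (k : ℤ) = (a k : ℝ) := by
  simp [extSeq]

lemma extSeq_neg (a : ℕ → NNReal) {k : ℤ} (h : k < 0) : extSeq a k = 0 := by
  simp [extSeq, not_le.mpr h]

lemma extSeq_nonneg (a : ℕ → NNReal) (k : ℤ) : 0 ≤ extSeq a k := by
  unfold extSeq
  split
  · exact (a _).coe_nonneg
  · exact le_refl 0

lemma extSeq_step (a : ℕ → NNReal)
    (halc : ∀ n : ℕ, 1 ≤ n → a (n - 1) * a (n + 1) ≤ a n ^ 2)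
    (haint : ∀ i j k : ℕ, i ≤ j → j ≤ k → a i ≠ 0 → a k ≠ 0 → a j ≠ 0)
    (i j : ℤ) (hij : i ≤ j) :
    extSeq a i * extSeq a (j + 1) ≤ extSeq a (i + 1) * extSeq a j := by
  by_cases h0 : 0 ≤ i
  · have h0j : 0 ≤ j := le_trans h0 hij
    lift i to ℕ using h0
    lift j to ℕ using h0j
    have hij' : i ≤ j := by exact_mod_cast hij
    rw [show (j : ℤ) + 1 = ((j + 1 : ℕ) : ℤ) by push_cast; ring,
        show (i : ℤ) + 1 = ((i + 1 : ℕ) : ℤ) by push_cast; ring,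
        extSeq_natCast, extSeq_natCast, extSeq_natCast, extSeq_natCast]
    exact_mod_cast nat_step a halc haint i j hij'
  · rw [extSeq_neg a (by omega), zero_mul]
    exact mul_nonneg (extSeq_nonneg a _) (extSeq_nonneg a _)

lemma sum_rep0 (a b : ℕ → NNReal) (m : ℕ) (N : ℤ) (hmN : (m : ℤ) ≤ N) :
    ((∑ k ∈ Finset.range (m + 1), a k * b (m - k) : NNReal) : ℝ)
      = ∑ k ∈ Finset.Icc (-1 : ℤ) N, extSeq a k * extSeq b ((m : ℤ) - k) := by
  have hL : ((∑ k ∈ Finset.range (m + 1), a k * b (m - k) : NNReal) : ℝ)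
      = ∑ j ∈ Finset.range (m + 1), (a j : ℝ) * (b (m - j) : ℝ) := by
    push_cast; rfl
  rw [hL]
  set J : Finset ℤ := (Finset.range (m + 1)).map
    ⟨fun j : ℕ => (j : ℤ), fun x y h => by have h' : (x : ℤ) = (y : ℤ) := h; omega⟩ with hJ
  have hJI : J ⊆ Finset.Icc (-1 : ℤ) N := by
    intro k hk
    simp only [hJ, Finset.mem_map, Finset.mem_range, Function.Embedding.coeFn_mk] at hk
    obtain ⟨j, hj, rfl⟩ := hk
    simp only [Finset.mem_Icc]
    erw [Function.Embedding.coeFn_mk]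
    omega
  have hz : ∀ k ∈ Finset.Icc (-1 : ℤ) N, k ∉ J → extSeq a k * extSeq b ((m : ℤ) - k) = 0 := by
    intro k _ hkJ
    by_cases h0 : k < 0
    · rw [extSeq_neg a h0, zero_mul]
    · by_cases h1 : (m : ℤ) - k < 0
      · rw [extSeq_neg b h1, mul_zero]
      · refine absurd (Finset.mem_map.mpr ⟨k.toNat, Finset.mem_range.mpr (by omega), ?_⟩) hkJ
        erw [Function.Embedding.coeFn_mk]
        omega
  rw [← Finset.sum_subset hJI hz, hJ, Finset.sum_map]
  apply Finset.sum_congr rfl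
  intro j hj
  simp only [Finset.mem_range] at hj
  erw [Function.Embedding.coeFn_mk]
  rw [extSeq_natCast, show (m : ℤ) - (j : ℤ) = ((m - j : ℕ) : ℤ) by omega, extSeq_natCast]

lemma sum_rep1 (a b : ℕ → NNReal) (m : ℕ) (N : ℤ) (hmN : (m : ℤ) - 1 ≤ N) :
    ((∑ k ∈ Finset.range (m + 1), a k * b (m - k) : NNReal) : ℝ)
      = ∑ k ∈ Finset.Icc (-1 : ℤ) N, extSeq a (k + 1) * extSeq b ((m : ℤ) - 1 - k) := by
  have hL : ((∑ k ∈ Finset.range (m + 1), a k * b (m - k) : NNReal) : ℝ)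
      = ∑ j ∈ Finset.range (m + 1), (a j : ℝ) * (b (m - j) : ℝ) := by
    push_cast; rfl
  rw [hL]
  set J : Finset ℤ := (Finset.range (m + 1)).map
    ⟨fun j : ℕ => (j : ℤ) - 1, fun x y h => by
      have h' : (x : ℤ) - 1 = (y : ℤ) - 1 := h
      omega⟩ with hJ
  have hJI : J ⊆ Finset.Icc (-1 : ℤ) N := by
    intro k hk
    simp only [hJ, Finset.mem_map, Finset.mem_range, Function.Embedding.coeFn_mk] at hk
    obtain ⟨j, hj, rfl⟩ := hk
    simp only [Finset.mem_Icc]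
    erw [Function.Embedding.coeFn_mk]
    omega
  have hz : ∀ k ∈ Finset.Icc (-1 : ℤ) N, k ∉ J →
      extSeq a (k + 1) * extSeq b ((m : ℤ) - 1 - k) = 0 := by
    intro k hk hkJ
    simp only [Finset.mem_Icc] at hk
    by_cases h1 : (m : ℤ) - 1 - k < 0
    · rw [extSeq_neg b h1, mul_zero]
    · refine absurd (Finset.mem_map.mpr ⟨(k + 1).toNat, Finset.mem_range.mpr (by omega), ?_⟩) hkJ
      erw [Function.Embedding.coeFn_mk]
      omega
  rw [← Finset.sum_subset hJI hz, hJ, Finset.sum_map]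
  apply Finset.sum_congr rfl
  intro j hj
  simp only [Finset.mem_range] at hj
  erw [Function.Embedding.coeFn_mk]
  rw [show (j : ℤ) - 1 + 1 = (j : ℤ) by ring, extSeq_natCast,
    show (m : ℤ) - 1 - ((j : ℤ) - 1) = ((m - j : ℕ) : ℤ) by omega, extSeq_natCast]

theorem stmt_2 (a b : ℕ → NNReal)
    (hafin : (Function.support a).Finite) (hbfin : (Function.support b).Finite)
    (halc : ∀ n : ℕ, 1 ≤ n → a (n - 1) * a (n + 1) ≤ a n ^ 2)
    (hblc : ∀ n : ℕ, 1 ≤ n → b (n - 1) * b (n + 1) ≤ b n ^ 2)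
    (haint : ∀ i j k : ℕ, i ≤ j → j ≤ k → a i ≠ 0 → a k ≠ 0 → a j ≠ 0)
    (hbint : ∀ i j k : ℕ, i ≤ j → j ≤ k → b i ≠ 0 → b k ≠ 0 → b j ≠ 0)
    (c : ℕ → NNReal) (hc : ∀ n, c n = ∑ k ∈ Finset.range (n + 1), a k * b (n - k)) :
    ∀ n : ℕ, 1 ≤ n → c (n - 1) * c (n + 1) ≤ c n ^ 2 := by
  intro n hn
  rw [← NNReal.coe_le_coe]
  push_cast
  set A : ℤ → ℝ := extSeq a with hAdef
  set B : ℤ → ℝ := extSeq b with hBdef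
  set I : Finset ℤ := Finset.Icc (-1 : ℤ) ((n : ℤ) + 1) with hIdef
  have hf : ((c (n - 1) : ℝ)) = ∑ k ∈ I, A k * B ((n : ℤ) - 1 - k) := by
    rw [hc (n - 1), sum_rep0 a b (n - 1) ((n : ℤ) + 1) (by omega),
      show ((n - 1 : ℕ) : ℤ) = (n : ℤ) - 1 by omega]
  have hg : ((c (n + 1) : ℝ)) = ∑ k ∈ I, A (k + 1) * B ((n : ℤ) - k) := by
    rw [hc (n + 1), sum_rep1 a b (n + 1) ((n : ℤ) + 1) (by omega),
      show ((n + 1 : ℕ) : ℤ) - 1 = (n : ℤ) by omega]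
  have hp : ((c n : ℝ)) = ∑ k ∈ I, A k * B ((n : ℤ) - k) := by
    rw [hc n, sum_rep0 a b n ((n : ℤ) + 1) (by omega)]
  have hq : ((c n : ℝ)) = ∑ k ∈ I, A (k + 1) * B ((n : ℤ) - 1 - k) := by
    rw [hc n, sum_rep1 a b n ((n : ℤ) + 1) (by omega)]
  have key : ∀ i j : ℤ,
      (A i * B ((n : ℤ) - 1 - i)) * (A (j + 1) * B ((n : ℤ) - j))
        + (A j * B ((n : ℤ) - 1 - j)) * (A (i + 1) * B ((n : ℤ) - i))
      ≤ (A i * B ((n : ℤ) - i)) * (A (j + 1) * B ((n : ℤ) - 1 - j))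
        + (A j * B ((n : ℤ) - j)) * (A (i + 1) * B ((n : ℤ) - 1 - i)) := by
    intro i j
    rcases lt_trichotomy i j with h | h | h
    · have h1 : A i * A (j + 1) ≤ A (i + 1) * A j :=
        extSeq_step a halc haint i j h.le
      have h2 := extSeq_step b hblc hbint ((n : ℤ) - 1 - j) ((n : ℤ) - 1 - i) (by omega)
      rw [show (n : ℤ) - 1 - i + 1 = (n : ℤ) - i by ring,
          show (n : ℤ) - 1 - j + 1 = (n : ℤ) - j by ring] at h2
      nlinarith [mul_nonneg (sub_nonneg.2 h1) (sub_nonneg.2 h2)]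
    · rw [h]
      apply le_of_eq
      ring
    · have h1 : A j * A (i + 1) ≤ A (j + 1) * A i :=
        extSeq_step a halc haint j i h.le
      have h2 := extSeq_step b hblc hbint ((n : ℤ) - 1 - i) ((n : ℤ) - 1 - j) (by omega)
      rw [show (n : ℤ) - 1 - i + 1 = (n : ℤ) - i by ring,
          show (n : ℤ) - 1 - j + 1 = (n : ℤ) - j by ring] at h2
      nlinarith [mul_nonneg (sub_nonneg.2 h1) (sub_nonneg.2 h2)]
  have main : (∑ k ∈ I, A k * B ((n : ℤ) - 1 - k)) * (∑ k ∈ I, A (k + 1) * B ((n : ℤ) - k))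
      ≤ (∑ k ∈ I, A k * B ((n : ℤ) - k)) * (∑ k ∈ I, A (k + 1) * B ((n : ℤ) - 1 - k)) := by
    rw [Finset.sum_mul_sum, Finset.sum_mul_sum]
    have hsum : ∑ i ∈ I, ∑ j ∈ I,
        ((A i * B ((n : ℤ) - 1 - i)) * (A (j + 1) * B ((n : ℤ) - j))
          + (A j * B ((n : ℤ) - 1 - j)) * (A (i + 1) * B ((n : ℤ) - i)))
        ≤ ∑ i ∈ I, ∑ j ∈ I,
        ((A i * B ((n : ℤ) - i)) * (A (j + 1) * B ((n : ℤ) - 1 - j))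
          + (A j * B ((n : ℤ) - j)) * (A (i + 1) * B ((n : ℤ) - 1 - i))) :=
      Finset.sum_le_sum fun i _ => Finset.sum_le_sum fun j _ => key i j
    have e1 : ∑ i ∈ I, ∑ j ∈ I,
        ((A i * B ((n : ℤ) - 1 - i)) * (A (j + 1) * B ((n : ℤ) - j))
          + (A j * B ((n : ℤ) - 1 - j)) * (A (i + 1) * B ((n : ℤ) - i)))
        = 2 * ∑ i ∈ I, ∑ j ∈ I, (A i * B ((n : ℤ) - 1 - i)) * (A (j + 1) * B ((n : ℤ) - j)) := by
      simp only [Finset.sum_add_distrib]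
      rw [Finset.sum_comm (f := fun i j =>
        (A j * B ((n : ℤ) - 1 - j)) * (A (i + 1) * B ((n : ℤ) - i)))]
      ring
    have e2 : ∑ i ∈ I, ∑ j ∈ I,
        ((A i * B ((n : ℤ) - i)) * (A (j + 1) * B ((n : ℤ) - 1 - j))
          + (A j * B ((n : ℤ) - j)) * (A (i + 1) * B ((n : ℤ) - 1 - i)))
        = 2 * ∑ i ∈ I, ∑ j ∈ I, (A i * B ((n : ℤ) - i)) * (A (j + 1) * B ((n : ℤ) - 1 - j)) := by
      simp only [Finset.sum_add_distrib]
      rw [Finset.sum_comm (f := fun i j =>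
        (A j * B ((n : ℤ) - j)) * (A (i + 1) * B ((n : ℤ) - 1 - i)))]
      ring
    rw [e1, e2] at hsum
    linarith
  calc ((c (n - 1) : ℝ)) * ((c (n + 1) : ℝ))
      = (∑ k ∈ I, A k * B ((n : ℤ) - 1 - k)) * (∑ k ∈ I, A (k + 1) * B ((n : ℤ) - k)) := by
        rw [hf, hg]
    _ ≤ (∑ k ∈ I, A k * B ((n : ℤ) - k)) * (∑ k ∈ I, A (k + 1) * B ((n : ℤ) - 1 - k)) := main
    _ = ((c n : ℝ)) * ((c n : ℝ)) := by rw [← hp, ← hq]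
    _ = ((c n : ℝ)) ^ 2 := (sq _).symm
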